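/- (Theorem 4.1, part 2: Lax–Friedrichs boundary-layer set for a convex scalar conservation law.) Let f : ℝ → ℝ be C² with f''(u) > 0 for every u, let u_* satisfy f'(u_*) = 0, fix M > 0 and u_B ∈ [−M, M], and let λ > 0, Q ∈ (0,1) satisfy (λ/Q)·sup_{|w| ≤ 8M} |f'(w)| ≤ 1. Define E_Lax^layer(u_B) = { v_∞ ∈ ℝ : there exists v : ℕ → ℝ with v(0) = u_B, ½(f(v(n)) + f(v(n+1))) − (Q/λ)(v(n+1) − v(n)) = f(v_∞) for all n, and v(n) → v_∞ as n → ∞ }. Then: if u_B > u_* (with u_B^* < u_* the unique other solution of f(u_B^*) = f(u_B)), one has E_Lax^layer(u_B) ∩ [−M, M] = ( (−∞, u_B^*) ∪ {u_B} ) ∩ [−M, M]; and if u_B ≤ u_*, one has E_Lax^layer(u_B) ∩ [−M, M] = (−∞, u_*] ∩ [−M, M]. -/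

import Mathlib

open Filter

/-- The set of admissible boundary values based on the discrete boundary layer
equation of a Lax–Friedrichs type scheme with numerical flux
`g(v,w) = ½(f(v)+f(w)) − (Q/λ)(w−v)`: `v_∞` is admissible iff there is a
sequence `v : ℕ → ℝ` with `v(0) = u_B`, `g(v(n), v(n+1)) = f(v_∞)` for all `n`,
and `v(n) → v_∞`. -/
def laxLayerSet (f : ℝ → ℝ) (lam Q uB : ℝ) : Set ℝ :=
  { vinf : ℝ | ∃ v : ℕ → ℝ, v 0 = uB ∧
      (∀ n : ℕ, (f (v n) + f (v (n + 1))) / 2 - Q / lam * (v (n + 1) - v n) = f vinf) ∧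
      Tendsto v atTop (nhds vinf) }

namespace LaxAux

open Set


noncomputable def psiF (f : ℝ → ℝ) (c : ℝ) : ℝ → ℝ := fun x => f x / 2 + c * x
noncomputable def phiF (f : ℝ → ℝ) (c : ℝ) : ℝ → ℝ := fun x => f x / 2 - c * x

lemma psi_phi_add (f : ℝ → ℝ) (c x : ℝ) : psiF f c x + phiF f c x = f x := by
  simp only [psiF, phiF]; ring

lemma hasDerivAt_psiF {f : ℝ → ℝ} (hdf : Differentiable ℝ f) (c x : ℝ) :
    HasDerivAt (psiF f c) (deriv f x / 2 + c) x := by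
  have h1 : HasDerivAt (fun x => f x / 2 + c * x) (deriv f x / 2 + c * 1) x :=
    (((hdf x).hasDerivAt).div_const 2).add ((hasDerivAt_id x).const_mul c)
  rw [mul_one] at h1; exact h1

lemma hasDerivAt_phiF {f : ℝ → ℝ} (hdf : Differentiable ℝ f) (c x : ℝ) :
    HasDerivAt (phiF f c) (deriv f x / 2 - c) x := by
  have h1 : HasDerivAt (fun x => f x / 2 - c * x) (deriv f x / 2 - c * 1) x :=
    (((hdf x).hasDerivAt).div_const 2).sub ((hasDerivAt_id x).const_mul c)
  rw [mul_one] at h1; exact h1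

lemma deriv_psiF {f : ℝ → ℝ} (hdf : Differentiable ℝ f) (c x : ℝ) :
    deriv (psiF f c) x = deriv f x / 2 + c := (hasDerivAt_psiF hdf c x).deriv

lemma deriv_phiF {f : ℝ → ℝ} (hdf : Differentiable ℝ f) (c x : ℝ) :
    deriv (phiF f c) x = deriv f x / 2 - c := (hasDerivAt_phiF hdf c x).deriv

lemma continuous_psiF {f : ℝ → ℝ} (hdf : Differentiable ℝ f) (c : ℝ) :
    Continuous (psiF f c) := by
  unfold psiF
  exact (hdf.continuous.div_const 2).add (continuous_const.mul continuous_id)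

lemma continuous_phiF {f : ℝ → ℝ} (hdf : Differentiable ℝ f) (c : ℝ) :
    Continuous (phiF f c) := by
  unfold phiF
  exact (hdf.continuous.div_const 2).sub (continuous_const.mul continuous_id)

lemma differentiable_psiF {f : ℝ → ℝ} (hdf : Differentiable ℝ f) (c : ℝ) :
    Differentiable ℝ (psiF f c) := fun x => (hasDerivAt_psiF hdf c x).differentiableAt

lemma secant_bounds {f : ℝ → ℝ} (hdf : Differentiable ℝ f) (hsm : StrictMono (deriv f))
    {a b : ℝ} (hab : a ≤ b) :
    deriv f a * (b - a) ≤ f b - f a ∧ f b - f a ≤ deriv f b * (b - a) := by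
  rcases eq_or_lt_of_le hab with rfl | h
  · simp
  · obtain ⟨ξ, hξ, heq⟩ := exists_deriv_eq_slope f h (hdf.continuous.continuousOn)
      (hdf.differentiableOn)
    have hba : (0:ℝ) < b - a := by linarith
    have h1 : f b - f a = deriv f ξ * (b - a) := by
      rw [heq]; field_simp
    have h2 : deriv f a ≤ deriv f ξ := (hsm.le_iff_le).mpr hξ.1.le
    have h3 : deriv f ξ ≤ deriv f b := (hsm.le_iff_le).mpr hξ.2.le
    constructor <;> nlinarith

lemma f_min {f : ℝ → ℝ} (hdf : Differentiable ℝ f) (hsm : StrictMono (deriv f))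
    {ustar : ℝ} (hstar : deriv f ustar = 0) (x : ℝ) : f ustar ≤ f x := by
  rcases le_total ustar x with h | h
  · have := (secant_bounds hdf hsm h).1; rw [hstar] at this; linarith
  · have := (secant_bounds hdf hsm h).2; rw [hstar] at this; linarith

lemma f_anti {f : ℝ → ℝ} (hdf : Differentiable ℝ f) (hsm : StrictMono (deriv f))
    {ustar : ℝ} (hstar : deriv f ustar = 0) : StrictAntiOn f (Iic ustar) := by
  apply strictAntiOn_of_deriv_neg (convex_Iic _) hdf.continuous.continuousOn
  intro x hx
  rw [interior_Iic] at hx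
  have := hsm hx
  rw [hstar] at this
  exact this

lemma f_mono {f : ℝ → ℝ} (hdf : Differentiable ℝ f) (hsm : StrictMono (deriv f))
    {ustar : ℝ} (hstar : deriv f ustar = 0) : StrictMonoOn f (Ici ustar) := by
  apply strictMonoOn_of_deriv_pos (convex_Ici _) hdf.continuous.continuousOn
  intro x hx
  rw [interior_Ici] at hx
  have := hsm hx
  rw [hstar] at this
  exact this

lemma psi_mono {f : ℝ → ℝ} {c M : ℝ} (hdf : Differentiable ℝ f) (hsm : StrictMono (deriv f))
    (hc : 0 < c) (hM : 0 < M) (hbound : ∀ w ∈ Icc (-(8*M)) (8*M), |deriv f w| ≤ c) :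
    StrictMonoOn (psiF f c) (Ici (-(8*M))) := by
  apply strictMonoOn_of_deriv_pos (convex_Ici _) (continuous_psiF hdf c).continuousOn
  intro x hx
  rw [interior_Ici] at hx
  rw [deriv_psiF hdf]
  have h2 : |deriv f (-(8*M))| ≤ c := hbound _ ⟨le_rfl, by linarith⟩
  have h3 := hsm hx
  have h4 := (abs_le.mp h2).1
  linarith

lemma phi_anti {f : ℝ → ℝ} {c M : ℝ} (hdf : Differentiable ℝ f) (hsm : StrictMono (deriv f))
    (hc : 0 < c) (hM : 0 < M) (hbound : ∀ w ∈ Icc (-(8*M)) (8*M), |deriv f w| ≤ c) :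
    StrictAntiOn (phiF f c) (Iic (8*M)) := by
  apply strictAntiOn_of_deriv_neg (convex_Iic _) (continuous_phiF hdf c).continuousOn
  intro x hx
  rw [interior_Iic] at hx
  rw [deriv_phiF hdf]
  have h2 : |deriv f (8*M)| ≤ c := hbound _ ⟨by linarith, le_rfl⟩
  have h3 := hsm hx
  have h4 := (abs_le.mp h2).2
  linarith

lemma mvt_abs {g : ℝ → ℝ} (hg : Differentiable ℝ g) {lo hi x V δ : ℝ}
    (hx : |x - V| ≤ δ) (hbd : ∀ ξ, |ξ - V| ≤ δ → lo ≤ deriv g ξ ∧ deriv g ξ ≤ hi)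
    (hlo : 0 ≤ lo) :
    lo * |x - V| ≤ |g x - g V| ∧ |g x - g V| ≤ hi * |x - V| := by
  rcases lt_trichotomy x V with h | rfl | h
  · obtain ⟨ξ, hξ, heq⟩ := exists_deriv_eq_slope g h (hg.continuous.continuousOn)
      (hg.differentiableOn)
    have hxV : 0 < V - x := by linarith
    have habs := abs_le.mp hx
    have hξb : |ξ - V| ≤ δ := by
      rw [abs_le]; constructor <;> [linarith [hξ.1]; linarith [hξ.2]]
    obtain ⟨hb1, hb2⟩ := hbd ξ hξb
    have h1 : g V - g x = deriv g ξ * (V - x) := by rw [heq]; field_simp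
    have hpos : 0 ≤ g V - g x := by nlinarith
    have habs1 : |g x - g V| = g V - g x := by rw [abs_sub_comm]; exact abs_of_nonneg hpos
    have habs2 : |x - V| = V - x := by rw [abs_sub_comm]; exact abs_of_nonneg hxV.le
    rw [habs1, habs2]
    constructor <;> nlinarith
  · simp [hlo]
  · obtain ⟨ξ, hξ, heq⟩ := exists_deriv_eq_slope g h (hg.continuous.continuousOn)
      (hg.differentiableOn)
    have hxV : 0 < x - V := by linarith
    have habs := abs_le.mp hx
    have hξb : |ξ - V| ≤ δ := by
      rw [abs_le]; constructor <;> [linarith [hξ.1]; linarith [hξ.2]]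
    obtain ⟨hb1, hb2⟩ := hbd ξ hξb
    have h1 : g x - g V = deriv g ξ * (x - V) := by rw [heq]; field_simp
    have hpos : 0 ≤ g x - g V := by nlinarith
    have habs1 : |g x - g V| = g x - g V := abs_of_nonneg hpos
    have habs2 : |x - V| = x - V := abs_of_nonneg hxV.le
    rw [habs1, habs2]
    constructor <;> nlinarith

lemma nosol {f : ℝ → ℝ} {c M : ℝ} (hdf : Differentiable ℝ f) (hsm : StrictMono (deriv f))
    (hcf' : Continuous (deriv f))
    (hc : 0 < c) (hM : 0 < M) (hbound : ∀ w ∈ Icc (-(8*M)) (8*M), |deriv f w| ≤ c)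
    {V z : ℝ} (hV1 : -M ≤ V) (hV2 : V ≤ M)
    (hz : z < -(8*M)) (hpsi : psiF f c z = psiF f c V) (y : ℝ) :
    f V < psiF f c y + phiF f c z := by
  have h8MV : -(8*M) < V := by linarith
  have hmono := psi_mono hdf hsm hc hM hbound
  have hψ8 : psiF f c (-(8*M)) < psiF f c V :=
    hmono (mem_Ici.mpr le_rfl) (mem_Ici.mpr h8MV.le) h8MV
  -- MVT on psi over [z, -8M]
  obtain ⟨ξ, hξmem, hξeq⟩ := exists_deriv_eq_slope (psiF f c) hz
    (continuous_psiF hdf c).continuousOn (differentiable_psiF hdf c).differentiableOn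
  have hξd : deriv (psiF f c) ξ = deriv f ξ / 2 + c := deriv_psiF hdf c ξ
  have hden : 0 < -(8*M) - z := by linarith
  have hnum : psiF f c (-(8*M)) - psiF f c z < 0 := by rw [hpsi]; linarith
  have hneg : deriv (psiF f c) ξ < 0 := by
    rw [hξeq]; exact div_neg_of_neg_of_pos hnum hden
  have hfξ : deriv f ξ < -(2*c) := by rw [hξd] at hneg; linarith
  -- IVT for deriv f on [ξ, -8M]
  have hb8 : |deriv f (-(8*M))| ≤ c := hbound _ ⟨le_rfl, by linarith⟩
  have hmem2 : -(2*c) ∈ Icc (deriv f ξ) (deriv f (-(8*M))) :=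
    ⟨hfξ.le, by have := (abs_le.mp hb8).1; linarith⟩
  obtain ⟨x₀, hx₀mem, hx₀⟩ := intermediate_value_Icc hξmem.2.le hcf'.continuousOn hmem2
  -- global min of psi at x₀
  have hmin : ∀ w, psiF f c x₀ ≤ psiF f c w := by
    intro w
    rcases le_total x₀ w with h | h
    · have hs := (secant_bounds hdf hsm h).1
      rw [hx₀] at hs
      simp only [psiF]; nlinarith
    · have hs := (secant_bounds hdf hsm h).2
      rw [hx₀] at hs
      simp only [psiF]; nlinarith
  -- convexity bounds
  have hbV : |deriv f V| ≤ c := hbound _ ⟨by linarith, by linarith⟩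
  have hs1 := (secant_bounds hdf hsm hx₀mem.2).2
  have hs2 := (secant_bounds hdf hsm (show -(8*M) ≤ V by linarith)).2
  -- f(-8M) - f x₀ ≤ c * (-8M - x₀)
  have hx₀8 : x₀ ≤ -(8*M) := hx₀mem.2
  have hc1 : f (-(8*M)) - f x₀ ≤ c * (-(8*M) - x₀) := by
    have h1 := (abs_le.mp hb8).2
    nlinarith
  have hc2 : f V - f (-(8*M)) ≤ c * (V - -(8*M)) := by
    have h1 := (abs_le.mp hbV).2
    nlinarith
  have hzx₀ : z < x₀ := lt_of_lt_of_le hξmem.1 hx₀mem.1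
  have hmy := hmin y
  have hφz : phiF f c z = psiF f c V - 2 * c * z := by
    have := hpsi
    simp only [psiF, phiF] at this ⊢
    linarith
  rw [hφz]
  have hx₀V : x₀ ≤ V := by linarith
  have hczx : c * z < c * x₀ := by nlinarith
  have hcxV : c * x₀ ≤ c * V := by nlinarith
  simp only [psiF] at hmy ⊢
  nlinarith

lemma forced_const {f : ℝ → ℝ} {c M ustar : ℝ} (hdf : Differentiable ℝ f)
    (hsm : StrictMono (deriv f)) (hcf' : Continuous (deriv f))
    (hc : 0 < c) (hM : 0 < M) (hbound : ∀ w ∈ Icc (-(8*M)) (8*M), |deriv f w| ≤ c)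
    (hstar : deriv f ustar = 0)
    {V : ℝ} (hV1 : -M ≤ V) (hV2 : V ≤ M) (hVstar : ustar < V)
    {v : ℕ → ℝ} (hv0 : -M ≤ v 0)
    (hrel : ∀ n, psiF f c (v n) + phiF f c (v (n+1)) = f V)
    (hlim : Tendsto v atTop (nhds V)) : ∀ n, v n = V := by
  set a := deriv f V with ha_def
  have ha : 0 < a := by
    have := hsm hVstar; rw [hstar] at this; exact this
  have hbV : |deriv f V| ≤ c := hbound _ ⟨by linarith, by linarith⟩
  have hac : a ≤ c := (abs_le.mp hbV).2
  -- neighborhood where deriv f > a/2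
  have hO : {x : ℝ | a/2 < deriv f x} ∈ nhds V :=
    (isOpen_lt continuous_const hcf').mem_nhds (by simp only [mem_setOf_eq]; linarith)
  obtain ⟨ε, hε, hball⟩ := Metric.mem_nhds_iff.mp hO
  set δ := min (ε/2) M with hδ_def
  have hδ : 0 < δ := lt_min (by linarith) hM
  have hδM : δ ≤ M := min_le_right _ _
  have hδε : δ < ε := lt_of_le_of_lt (min_le_left _ _) (by linarith)
  have hfd' : ∀ x, |x - V| ≤ δ → a/2 < deriv f x := by
    intro x hx
    exact hball (by rw [Metric.mem_ball, Real.dist_eq]; linarith)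
  have hI8 : ∀ x, |x - V| ≤ δ → x ∈ Icc (-(8*M)) (8*M) := by
    intro x hx
    have := abs_le.mp hx
    constructor <;> [linarith [this.1]; linarith [this.2]]
  -- derivative bounds on the ball for psi and -phi
  have hψbd : ∀ ξ, |ξ - V| ≤ δ → c + a/4 ≤ deriv (psiF f c) ξ ∧ deriv (psiF f c) ξ ≤ 3*c/2 := by
    intro ξ hξ
    rw [deriv_psiF hdf]
    have h1 := hfd' ξ hξ
    have h2 := (abs_le.mp (hbound ξ (hI8 ξ hξ))).2
    constructor <;> linarith
  have hnφ : Differentiable ℝ (fun x => -(phiF f c x)) := by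
    intro x; exact ((hasDerivAt_phiF hdf c x).neg).differentiableAt
  have hnφd : ∀ x : ℝ, deriv (fun x => -(phiF f c x)) x = c - deriv f x / 2 := by
    intro x
    have := ((hasDerivAt_phiF hdf c x).neg).deriv
    show deriv (-phiF f c) x = _; rw [this]; ring
  have hφbd : ∀ ξ, |ξ - V| ≤ δ → c/2 ≤ deriv (fun x => -(phiF f c x)) ξ ∧
      deriv (fun x => -(phiF f c x)) ξ ≤ c - a/4 := by
    intro ξ hξ
    rw [hnφd]
    have h1 := hfd' ξ hξ
    have h2 := (abs_le.mp (hbound ξ (hI8 ξ hξ))).2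
    constructor <;> linarith
  -- tail in the ball
  obtain ⟨N, hN⟩ := (Metric.tendsto_atTop.mp hlim) δ hδ
  have hNle : ∀ n, N ≤ n → |v n - V| ≤ δ := by
    intro n hn
    have := hN n hn
    rw [Real.dist_eq] at this
    exact this.le
  -- contraction step
  have hstep : ∀ m, N ≤ m → (c + a/4) * |v m - V| ≤ (c - a/4) * |v (m+1) - V| := by
    intro m hm
    have h1 := (mvt_abs (differentiable_psiF hdf c) (hNle m hm) hψbd (by linarith)).1
    have h2 := (mvt_abs hnφ (hNle (m+1) (by omega)) hφbd (by linarith)).2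
    have heq : psiF f c (v m) - psiF f c V = -(phiF f c (v (m+1))) - -(phiF f c V) := by
      have hr := hrel m
      have hs := psi_phi_add f c V
      linarith
    calc (c + a/4) * |v m - V| ≤ |psiF f c (v m) - psiF f c V| := h1
      _ = |(fun x => -(phiF f c x)) (v (m+1)) - (fun x => -(phiF f c x)) V| := by
          rw [heq]
      _ ≤ (c - a/4) * |v (m+1) - V| := h2
  set r := (c - a/4) / (c + a/4) with hr_def
  have hcp : 0 < c + a/4 := by linarith
  have hr0 : 0 ≤ r := div_nonneg (by linarith) hcp.le
  have hr1 : r < 1 := (div_lt_one hcp).mpr (by linarith)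
  have hgeom : ∀ n, N ≤ n → ∀ k, |v n - V| ≤ r^k * |v (n+k) - V| := by
    intro n hn k
    induction k with
    | zero => simp
    | succ k ih =>
      have h1 : |v (n+k) - V| ≤ r * |v (n+k+1) - V| := by
        have := hstep (n+k) (by omega)
        rw [hr_def, div_mul_eq_mul_div, le_div_iff₀ hcp]
        nlinarith [abs_nonneg (v (n+k) - V)]
      calc |v n - V| ≤ r^k * |v (n+k) - V| := ih
        _ ≤ r^k * (r * |v (n+k+1) - V|) := by
            exact mul_le_mul_of_nonneg_left h1 (pow_nonneg hr0 k)
        _ = r^(k+1) * |v (n+(k+1)) - V| := by ring_nf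
  have hfwd : ∀ n, N ≤ n → v n = V := by
    intro n hn
    have hb : ∀ k, |v n - V| ≤ r^k * δ := by
      intro k
      calc |v n - V| ≤ r^k * |v (n+k) - V| := hgeom n hn k
        _ ≤ r^k * δ := mul_le_mul_of_nonneg_left (hNle (n+k) (by omega)) (pow_nonneg hr0 k)
    have h0 : Tendsto (fun k => r^k * δ) atTop (nhds 0) := by
      have := (tendsto_pow_atTop_nhds_zero_of_lt_one hr0 hr1).mul_const δ
      simpa using this
    have : |v n - V| ≤ 0 := ge_of_tendsto h0 (Eventually.of_forall hb)
    have h2 : |v n - V| = 0 := le_antisymm this (abs_nonneg _)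
    have := abs_eq_zero.mp h2
    linarith
  have hmono := psi_mono hdf hsm hc hM hbound
  have hback : ∀ n, v (n+1) = V → v n = V := by
    intro n hn1
    have hrn := hrel n
    rw [hn1] at hrn
    have hs := psi_phi_add f c V
    have hψeq : psiF f c (v n) = psiF f c V := by linarith
    by_cases hge : -(8*M) ≤ v n
    · exact hmono.injOn (mem_Ici.mpr hge) (mem_Ici.mpr (by linarith : -(8*M) ≤ V)) hψeq
    · push_neg at hge
      cases n with
      | zero => exfalso; linarith
      | succ m =>
        exfalso
        exact absurd (hrel m)
          (ne_of_gt (nosol hdf hsm hcf' hc hM hbound hV1 hV2 hge hψeq (v m)))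
  have hdown : ∀ k, v (N - k) = V := by
    intro k
    induction k with
    | zero => simpa using hfwd N le_rfl
    | succ k ih =>
      rcases Nat.eq_zero_or_pos (N - k) with h0 | hpos
      · have h1 : N - (k+1) = 0 := by omega
        rw [h1]; rw [h0] at ih; exact ih
      · have heq : N - (k+1) + 1 = N - k := by omega
        exact hback _ (by rw [heq]; exact ih)
  intro n
  rcases le_or_gt N n with h | h
  · exact hfwd n h
  · have h1 : N - (N - n) = n := by omega
    rw [← h1]; exact hdown (N - n)

lemma mid_impossible {f : ℝ → ℝ} {c M ustar : ℝ} (hdf : Differentiable ℝ f)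
    (hsm : StrictMono (deriv f))
    (hc : 0 < c) (hM : 0 < M) (hbound : ∀ w ∈ Icc (-(8*M)) (8*M), |deriv f w| ≤ c)
    (hstar : deriv f ustar = 0)
    {V uB uBstar : ℝ} (huB1 : ustar < uB) (huB2 : uB ≤ M) (hV1 : -M ≤ V)
    (h1 : uBstar ≤ V) (h2 : V ≤ ustar) (hfeq : f uBstar = f uB)
    {v : ℕ → ℝ} (h0 : v 0 = uB)
    (hrel : ∀ n, psiF f c (v n) + phiF f c (v (n+1)) = f V)
    (hlim : Tendsto v atTop (nhds V)) : False := by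
  have hustar1 : -M ≤ ustar := le_trans hV1 h2
  have hustar2 : ustar ≤ M := by linarith
  have hanti := f_anti hdf hsm hstar
  have hmonoF := f_mono hdf hsm hstar
  have hψmono := psi_mono hdf hsm hc hM hbound
  have hφanti := phi_anti hdf hsm hc hM hbound
  have hfVle : f V ≤ f uB := by
    rw [← hfeq]
    exact hanti.antitoneOn (mem_Iic.mpr (by linarith)) (mem_Iic.mpr h2) h1
  have hfmin : ∀ x, f ustar ≤ f x := f_min hdf hsm hstar
  obtain ⟨W, hWmem, hWeq⟩ := intermediate_value_Icc huB1.le hdf.continuous.continuousOn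
    ⟨hfmin V, hfVle⟩
  by_cases hex : ∃ n, v n < W
  · set T := Nat.find hex with hT_def
    have hT : v T < W := Nat.find_spec hex
    have hT0 : T ≠ 0 := by
      intro h
      rw [h, h0] at hT
      exact absurd hT (not_lt.mpr hWmem.2)
    obtain ⟨p, hp⟩ := Nat.exists_eq_succ_of_ne_zero hT0
    have hvp : W ≤ v p := not_lt.mp (Nat.find_min hex (by omega))
    have hrelp : psiF f c (v p) + phiF f c (v T) = f V := by
      rw [hp]; exact hrel p
    have hfvp : f W ≤ f (v p) :=
      hmonoF.monotoneOn (mem_Ici.mpr hWmem.1) (mem_Ici.mpr (by linarith [hWmem.1])) hvp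
    have hvT2 : v T ≤ 8*M := by linarith [hWmem.2]
    rcases le_or_gt (v p) (8*M) with h8 | h8
    · have hφ : phiF f c (v T) ≤ phiF f c (v p) := by
        have hs := psi_phi_add f c (v p)
        rw [hWeq] at hfvp
        linarith
      have hlt : phiF f c (v p) < phiF f c (v T) :=
        hφanti (mem_Iic.mpr hvT2) (mem_Iic.mpr h8) (by linarith)
      linarith
    · have hA : psiF f c (8*M) < psiF f c (v p) :=
        hψmono (mem_Ici.mpr (by linarith)) (mem_Ici.mpr (by linarith)) h8
      have hB : phiF f c W < phiF f c (v T) :=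
        hφanti (mem_Iic.mpr hvT2) (mem_Iic.mpr (by linarith [hWmem.2])) hT
      have hC : psiF f c W ≤ psiF f c (8*M) :=
        hψmono.monotoneOn (mem_Ici.mpr (by linarith [hWmem.1]))
          (mem_Ici.mpr (by linarith)) (by linarith [hWmem.2])
      have hsumW := psi_phi_add f c W
      rw [hWeq] at hsumW
      linarith
  · push_neg at hex
    have hVW : W ≤ V := ge_of_tendsto hlim (Eventually.of_forall hex)
    have hVu : V = ustar := le_antisymm h2 (le_trans hWmem.1 hVW)
    have hfVmin : ∀ x, f V ≤ f x := by rw [hVu]; exact hfmin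
    have hmono2 : Monotone (fun n => psiF f c (v n)) := by
      apply monotone_nat_of_le_succ
      intro n
      have hr := hrel n
      have hs := psi_phi_add f c (v (n+1))
      have := hfVmin (v (n+1))
      show psiF f c (v n) ≤ psiF f c (v (n+1))
      linarith
    have hlimψ : Tendsto (fun n => psiF f c (v n)) atTop (nhds (psiF f c V)) :=
      ((continuous_psiF hdf c).tendsto V).comp hlim
    have hle0 : psiF f c uB ≤ psiF f c V := by
      have := hmono2.ge_of_tendsto hlimψ 0
      simpa [h0] using this
    have hlt2 : psiF f c ustar < psiF f c uB :=
      hψmono (mem_Ici.mpr (by linarith)) (mem_Ici.mpr (by linarith)) huB1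
    rw [hVu] at hle0
    linarith

lemma construct_dec {f : ℝ → ℝ} {c M : ℝ} (hdf : Differentiable ℝ f)
    (hsm : StrictMono (deriv f))
    (hc : 0 < c) (hM : 0 < M) (hbound : ∀ w ∈ Icc (-(8*M)) (8*M), |deriv f w| ≤ c)
    {V uB : ℝ} (hV1 : -M ≤ V) (hV2 : V ≤ M) (huB2 : uB ≤ M)
    (hVuB : V < uB) (hlev : ∀ x, V < x → x ≤ uB → f x < f V) :
    ∃ v : ℕ → ℝ, v 0 = uB ∧ (∀ n, psiF f c (v n) + phiF f c (v (n+1)) = f V) ∧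
      Tendsto v atTop (nhds V) := by
  have hψmono := psi_mono hdf hsm hc hM hbound
  have step : ∀ x, V ≤ x → x ≤ uB → ∃ w, V ≤ w ∧ w ≤ x ∧
      psiF f c x + phiF f c w = f V := by
    intro x hx1 hx2
    have hflev : f x ≤ f V := by
      rcases eq_or_lt_of_le hx1 with rfl | h
      · exact le_rfl
      · exact (hlev x h hx2).le
    have hψ : psiF f c V ≤ psiF f c x :=
      hψmono.monotoneOn (mem_Ici.mpr (by linarith)) (mem_Ici.mpr (by linarith)) hx1
    have hmem : f V - psiF f c x ∈ Icc (phiF f c x) (phiF f c V) := by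
      constructor
      · have := psi_phi_add f c x; linarith
      · have := psi_phi_add f c V; linarith
    obtain ⟨w, hw, hweq⟩ :=
      intermediate_value_Icc' hx1 (continuous_phiF hdf c).continuousOn hmem
    exact ⟨w, hw.1, hw.2, by linarith [hweq]⟩
  have hg : ∀ x : {x : ℝ // V ≤ x ∧ x ≤ uB}, ∃ w, V ≤ w ∧ w ≤ x.1 ∧
      psiF f c x.1 + phiF f c w = f V := fun x => step x.1 x.2.1 x.2.2
  let g : {x : ℝ // V ≤ x ∧ x ≤ uB} → {x : ℝ // V ≤ x ∧ x ≤ uB} := fun x =>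
    ⟨(hg x).choose, (hg x).choose_spec.1, le_trans (hg x).choose_spec.2.1 x.2.2⟩
  let u : ℕ → {x : ℝ // V ≤ x ∧ x ≤ uB} := fun n => g^[n] ⟨uB, hVuB.le, le_rfl⟩
  set v : ℕ → ℝ := fun n => (u n).1 with hv_def
  have hv0 : v 0 = uB := rfl
  have hsucc : ∀ n, v (n+1) = (hg (u n)).choose := by
    intro n
    show (g^[n+1] ⟨uB, hVuB.le, le_rfl⟩).1 = _
    rw [Function.iterate_succ_apply' g n]
  have hrelv : ∀ n, psiF f c (v n) + phiF f c (v (n+1)) = f V := by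
    intro n
    rw [hsucc n]
    exact (hg (u n)).choose_spec.2.2
  have hle : ∀ n, v (n+1) ≤ v n := by
    intro n
    rw [hsucc n]
    exact (hg (u n)).choose_spec.2.1
  have hant : Antitone v := antitone_nat_of_succ_le hle
  have hlb : ∀ n, V ≤ v n := fun n => (u n).2.1
  have hbdd : BddBelow (Set.range v) := ⟨V, by rintro y ⟨n, rfl⟩; exact hlb n⟩
  have hconv : Tendsto v atTop (nhds (⨅ n, v n)) := tendsto_atTop_ciInf hant hbdd
  set L := ⨅ n, v n with hL_def
  have hLV : V ≤ L := le_ciInf hlb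
  have hLuB : L ≤ uB := le_trans (ciInf_le hbdd 0) (le_of_eq hv0)
  have hfL : f L = f V := by
    have h1 : Tendsto (fun n => psiF f c (v n) + phiF f c (v (n+1))) atTop
        (nhds (psiF f c L + phiF f c L)) := by
      apply Tendsto.add
      · exact ((continuous_psiF hdf c).tendsto L).comp hconv
      · exact ((continuous_phiF hdf c).tendsto L).comp
          (hconv.comp (tendsto_add_atTop_nat 1))
    have h2 : Tendsto (fun n => psiF f c (v n) + phiF f c (v (n+1))) atTop
        (nhds (f V)) := by
      simp only [hrelv]
      exact tendsto_const_nhds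
    have h3 := tendsto_nhds_unique h1 h2
    have h4 := psi_phi_add f c L
    linarith
  have hLeq : L = V := by
    by_contra h
    have hlt : V < L := lt_of_le_of_ne hLV (Ne.symm h)
    exact absurd hfL (ne_of_lt (hlev L hlt hLuB))
  exact ⟨v, hv0, hrelv, hLeq ▸ hconv⟩

lemma construct_inc {f : ℝ → ℝ} {c M : ℝ} (hdf : Differentiable ℝ f)
    (hsm : StrictMono (deriv f))
    (hc : 0 < c) (hM : 0 < M) (hbound : ∀ w ∈ Icc (-(8*M)) (8*M), |deriv f w| ≤ c)
    {V uB : ℝ} (hV2 : V ≤ M) (huB1 : -M ≤ uB)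
    (hVuB : uB < V) (hlev : ∀ x, uB ≤ x → x < V → f V < f x) :
    ∃ v : ℕ → ℝ, v 0 = uB ∧ (∀ n, psiF f c (v n) + phiF f c (v (n+1)) = f V) ∧
      Tendsto v atTop (nhds V) := by
  have hψmono := psi_mono hdf hsm hc hM hbound
  have step : ∀ x, uB ≤ x → x ≤ V → ∃ w, x ≤ w ∧ w ≤ V ∧
      psiF f c x + phiF f c w = f V := by
    intro x hx1 hx2
    have hflev : f V ≤ f x := by
      rcases eq_or_lt_of_le hx2 with rfl | h
      · exact le_rfl
      · exact (hlev x hx1 h).le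
    have hψ : psiF f c x ≤ psiF f c V :=
      hψmono.monotoneOn (mem_Ici.mpr (by linarith)) (mem_Ici.mpr (by linarith)) hx2
    have hmem : f V - psiF f c x ∈ Icc (phiF f c V) (phiF f c x) := by
      constructor
      · have := psi_phi_add f c V; linarith
      · have := psi_phi_add f c x; linarith
    obtain ⟨w, hw, hweq⟩ :=
      intermediate_value_Icc' hx2 (continuous_phiF hdf c).continuousOn hmem
    exact ⟨w, hw.1, hw.2, by linarith [hweq]⟩
  have hg : ∀ x : {x : ℝ // uB ≤ x ∧ x ≤ V}, ∃ w, x.1 ≤ w ∧ w ≤ V ∧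
      psiF f c x.1 + phiF f c w = f V := fun x => step x.1 x.2.1 x.2.2
  let g : {x : ℝ // uB ≤ x ∧ x ≤ V} → {x : ℝ // uB ≤ x ∧ x ≤ V} := fun x =>
    ⟨(hg x).choose, le_trans x.2.1 (hg x).choose_spec.1, (hg x).choose_spec.2.1⟩
  let u : ℕ → {x : ℝ // uB ≤ x ∧ x ≤ V} := fun n => g^[n] ⟨uB, le_rfl, hVuB.le⟩
  set v : ℕ → ℝ := fun n => (u n).1 with hv_def
  have hv0 : v 0 = uB := rfl
  have hsucc : ∀ n, v (n+1) = (hg (u n)).choose := by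
    intro n
    show (g^[n+1] ⟨uB, le_rfl, hVuB.le⟩).1 = _
    rw [Function.iterate_succ_apply' g n]
  have hrelv : ∀ n, psiF f c (v n) + phiF f c (v (n+1)) = f V := by
    intro n
    rw [hsucc n]
    exact (hg (u n)).choose_spec.2.2
  have hle : ∀ n, v n ≤ v (n+1) := by
    intro n
    rw [hsucc n]
    exact (hg (u n)).choose_spec.1
  have hmon : Monotone v := monotone_nat_of_le_succ hle
  have hub : ∀ n, v n ≤ V := fun n => (u n).2.2
  have hbdd : BddAbove (Set.range v) := ⟨V, by rintro y ⟨n, rfl⟩; exact hub n⟩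
  have hconv : Tendsto v atTop (nhds (⨆ n, v n)) := tendsto_atTop_ciSup hmon hbdd
  set L := ⨆ n, v n with hL_def
  have hLV : L ≤ V := ciSup_le hub
  have hLuB : uB ≤ L := le_trans (le_of_eq hv0.symm) (le_ciSup hbdd 0)
  have hfL : f L = f V := by
    have h1 : Tendsto (fun n => psiF f c (v n) + phiF f c (v (n+1))) atTop
        (nhds (psiF f c L + phiF f c L)) := by
      apply Tendsto.add
      · exact ((continuous_psiF hdf c).tendsto L).comp hconv
      · exact ((continuous_phiF hdf c).tendsto L).comp
          (hconv.comp (tendsto_add_atTop_nat 1))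
    have h2 : Tendsto (fun n => psiF f c (v n) + phiF f c (v (n+1))) atTop
        (nhds (f V)) := by
      simp only [hrelv]
      exact tendsto_const_nhds
    have h3 := tendsto_nhds_unique h1 h2
    have h4 := psi_phi_add f c L
    linarith
  have hLeq : L = V := by
    by_contra h
    have hlt : L < V := lt_of_le_of_ne hLV h
    exact absurd hfL.symm (ne_of_lt (hlev L hLuB hlt))
  exact ⟨v, hv0, hrelv, hLeq ▸ hconv⟩

end LaxAux

open LaxAux

/-- Theorem 4.1, part 2, Lax–Friedrichs boundary-layer set: for a
strictly convex C² flux `f` with critical point `u_*`, `u_B ∈ [−M,M]` and CFL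
condition `(λ/Q)·sup_{|w|≤8M}|f'(w)| ≤ 1`: if `u_B > u_*` (with `u_B^* < u_*`
the other solution of `f(u_B^*) = f(u_B)`), then
`E_Lax^layer(u_B) ∩ [−M,M] = ((−∞, u_B^*) ∪ {u_B}) ∩ [−M,M]`; and if
`u_B ≤ u_*`, then `E_Lax^layer(u_B) ∩ [−M,M] = (−∞, u_*] ∩ [−M,M]`. -/
theorem laxLayerSet_eq_convex
    (f : ℝ → ℝ) (hf : ContDiff ℝ 2 f) (hf'' : ∀ u, 0 < deriv (deriv f) u)
    (ustar : ℝ) (hstar : deriv f ustar = 0)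
    (M : ℝ) (hM : 0 < M) (uB : ℝ) (huB : uB ∈ Set.Icc (-M) M)
    (lam Q : ℝ) (hlam : 0 < lam) (hQ : Q ∈ Set.Ioo (0 : ℝ) 1)
    (hCFL : lam / Q * sSup ((fun w => |deriv f w|) '' Set.Icc (-(8 * M)) (8 * M)) ≤ 1) :
    (ustar < uB → ∀ uBstar : ℝ, uBstar < ustar → f uBstar = f uB →
      laxLayerSet f lam Q uB ∩ Set.Icc (-M) M
        = (Set.Iio uBstar ∪ {uB}) ∩ Set.Icc (-M) M) ∧
    (uB ≤ ustar →
      laxLayerSet f lam Q uB ∩ Set.Icc (-M) M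
        = Set.Iic ustar ∩ Set.Icc (-M) M) := by
  have hdf : Differentiable ℝ f := hf.differentiable two_ne_zero
  have hcf' : Continuous (deriv f) := hf.continuous_deriv one_le_two
  have hsm : StrictMono (deriv f) := strictMono_of_deriv_pos hf''
  set c := Q / lam with hc_def
  have hc : 0 < c := div_pos hQ.1 hlam
  have hbound : ∀ w ∈ Set.Icc (-(8*M)) (8*M), |deriv f w| ≤ c := by
    intro w hw
    set S := sSup ((fun w => |deriv f w|) '' Set.Icc (-(8 * M)) (8 * M)) with hS_def
    have hSbdd : BddAbove ((fun w => |deriv f w|) '' Set.Icc (-(8 * M)) (8 * M)) :=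
      (isCompact_Icc.image_of_continuousOn hcf'.abs.continuousOn).bddAbove
    have h1 : |deriv f w| ≤ S := le_csSup hSbdd ⟨w, hw, rfl⟩
    have h2 : S ≤ c := by
      have h3 := mul_le_mul_of_nonneg_left hCFL hc.le
      have hl0 : lam ≠ 0 := ne_of_gt hlam
      have hq0 : Q ≠ 0 := ne_of_gt hQ.1
      have h4 : c * (lam / Q * S) = S := by
        rw [hc_def]; field_simp
      rw [h4, mul_one] at h3
      exact h3
    linarith
  have hkey : ∀ (a b vinf : ℝ), ((f a + f b) / 2 - Q / lam * (b - a) = f vinf) ↔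
      (psiF f c a + phiF f c b = f vinf) := by
    intro a b vinf
    constructor <;> intro h <;> [skip; skip] <;>
      · simp only [psiF, phiF] at *
        linarith [h]
  have hmemiff : ∀ V : ℝ, V ∈ laxLayerSet f lam Q uB ↔ ∃ v : ℕ → ℝ, v 0 = uB ∧
      (∀ n, psiF f c (v n) + phiF f c (v (n+1)) = f V) ∧ Tendsto v atTop (nhds V) := by
    intro V
    constructor
    · rintro ⟨v, h0, hr, hl⟩
      exact ⟨v, h0, fun n => (hkey _ _ _).mp (hr n), hl⟩
    · rintro ⟨v, h0, hr, hl⟩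
      exact ⟨v, h0, fun n => (hkey _ _ _).mpr (hr n), hl⟩
  have hanti := f_anti hdf hsm hstar
  have hmonoF := f_mono hdf hsm hstar
  constructor
  · -- case ustar < uB
    intro huBstar uBstar hu1 hu2
    ext V
    simp only [Set.mem_inter_iff, Set.mem_Icc, Set.mem_union, Set.mem_Iio,
      Set.mem_singleton_iff]
    constructor
    · rintro ⟨hmem, hIcc⟩
      refine ⟨?_, hIcc⟩
      obtain ⟨v, h0, hrel, hlim⟩ := (hmemiff V).mp hmem
      rcases le_or_gt V ustar with hle | hgt
      · left
        by_contra hcon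
        push_neg at hcon
        exact mid_impossible hdf hsm hc hM hbound hstar huBstar huB.2 hIcc.1
          hcon hle hu2 h0 hrel hlim
      · right
        have hall := forced_const hdf hsm hcf' hc hM hbound hstar hIcc.1 hIcc.2 hgt
          (by rw [h0]; exact huB.1) hrel hlim
        have := hall 0
        rw [h0] at this
        exact this.symm
    · rintro ⟨hor, hIcc⟩
      refine ⟨?_, hIcc⟩
      apply (hmemiff V).mpr
      rcases hor with hlt | heq
      · have hVub2 : V ≤ ustar := by linarith
        have hlev : ∀ x, V < x → x ≤ uB → f x < f V := by
          intro x hx1 hx2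
          rcases le_or_gt x ustar with h | h
          · exact hanti (Set.mem_Iic.mpr hVub2) (Set.mem_Iic.mpr h) hx1
          · have hfx : f x ≤ f uB :=
              hmonoF.monotoneOn (Set.mem_Ici.mpr h.le)
                (Set.mem_Ici.mpr huBstar.le) hx2
            have hlt2 : f uBstar < f V :=
              hanti (Set.mem_Iic.mpr hVub2) (Set.mem_Iic.mpr hu1.le) hlt
            rw [hu2] at hlt2
            linarith
        exact construct_dec hdf hsm hc hM hbound hIcc.1 hIcc.2 huB.2
          (by linarith) hlev
      · rw [heq]
        exact ⟨fun _ => uB, rfl, fun n => by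
          have := psi_phi_add f c uB; linarith, tendsto_const_nhds⟩
  · -- case uB ≤ ustar
    intro hle
    ext V
    simp only [Set.mem_inter_iff, Set.mem_Icc, Set.mem_Iic]
    constructor
    · rintro ⟨hmem, hIcc⟩
      refine ⟨?_, hIcc⟩
      by_contra h
      push_neg at h
      obtain ⟨v, h0, hrel, hlim⟩ := (hmemiff V).mp hmem
      have hall := forced_const hdf hsm hcf' hc hM hbound hstar hIcc.1 hIcc.2 h
        (by rw [h0]; exact huB.1) hrel hlim
      have h1 := hall 0
      rw [h0] at h1
      linarith
    · rintro ⟨hVle, hIcc⟩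
      refine ⟨?_, hIcc⟩
      apply (hmemiff V).mpr
      rcases lt_trichotomy V uB with h | h | h
      · have hlev : ∀ x, V < x → x ≤ uB → f x < f V := by
          intro x hx1 hx2
          exact hanti (Set.mem_Iic.mpr hVle) (Set.mem_Iic.mpr (by linarith)) hx1
        exact construct_dec hdf hsm hc hM hbound hIcc.1 hIcc.2 huB.2 h hlev
      · rw [h]
        exact ⟨fun _ => uB, rfl, fun n => by
          have := psi_phi_add f c uB; linarith, tendsto_const_nhds⟩
      · have hlev : ∀ x, uB ≤ x → x < V → f V < f x := by
          intro x hx1 hx2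
          exact hanti (Set.mem_Iic.mpr (by linarith)) (Set.mem_Iic.mpr hVle) hx2
        exact construct_inc hdf hsm hc hM hbound hIcc.2 huB.1 h hlev
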